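/- Let OPT' be an optimal schedule (with respect to pseudo-cost) of a job set with at most ŷ densities and all release dates at most R, where all jobs released by any time r can be rescheduled within an interval of length r·ŷ·(1+δ)/δ^{23} starting at any time after r. Then there exists an optimal schedule in which no job completes after time ŷ·R/δ^{25}. -/

import Mathlib

open Finset

/-- feasibility of a schedule with release dates `r`, sizes `p`, speeds `s`. -/
def Feasible (n m : ℕ) (r p : Fin n → ℝ) (s : Fin m → ℝ)
    (M : Fin n → Fin m) (C : Fin n → ℝ) : Prop :=
  (∀ j, r j + p j / s (M j) ≤ C j) ∧
    ∀ j k, j ≠ k → M j = M k →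
      C j ≤ C k - p k / s (M k) ∨ C k ≤ C j - p j / s (M j)

/-- total pseudo-cost: a job whose completion time lies in `[(1+δ)^i,(1+δ)^{i+1})`
contributes its weight times `(1+δ)^{i+1}`. -/
noncomputable def pseudoCost (n : ℕ) (δ : ℝ) (w C : Fin n → ℝ) : ℝ :=
  ∑ j, w j * (1 + δ) ^ (⌊Real.logb (1 + δ) (C j)⌋ + 1)

lemma floor_logb_eq_of {b x : ℝ} {ι : ℤ} (hb : 1 < b)
    (h1 : b ^ ι ≤ x) (h2 : x < b ^ (ι + 1)) : ⌊Real.logb b x⌋ = ι := by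
  have hb0 : 0 < b := lt_trans one_pos hb
  have hx : 0 < x := lt_of_lt_of_le (zpow_pos hb0 ι) h1
  rw [Int.floor_eq_iff]
  refine ⟨?_, ?_⟩
  · rw [Real.le_logb_iff_rpow_le hb hx, Real.rpow_intCast]; exact h1
  · rw [Real.logb_lt_iff_lt_rpow hb hx,
      show ((ι:ℝ)+1) = ((ι+1:ℤ):ℝ) by push_cast; ring, Real.rpow_intCast]
    exact h2

lemma ι_le_floor_logb {b x : ℝ} {ι : ℤ} (hb : 1 < b)
    (h1 : b ^ ι < x) : ι ≤ ⌊Real.logb b x⌋ := by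
  have hb0 : 0 < b := lt_trans one_pos hb
  have hx : 0 < x := lt_trans (zpow_pos hb0 ι) h1
  rw [Int.le_floor, Real.le_logb_iff_rpow_le hb hx, Real.rpow_intCast]
  exact h1.le


set_option maxHeartbeats 800000 in
/-- if an optimal (w.r.t. pseudo-cost) feasible schedule exists, at most
`yhat` densities occur, all release dates are at most `R`, and for every feasible
schedule and every power `(1+δ)^ι > R` the jobs completing after `(1+δ)^ι` can be
rescheduled within an interval of length `R·yhat(1+δ)/δ²³` starting at `(1+δ)^ι`
(keeping the rest of the schedule), then there exists an optimal feasible schedule in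
which no job completes after time `yhat·R/δ²⁵`. -/
theorem optimal_schedule_bounded_horizon (n m : ℕ) (δ : ℝ)
    (hδ0 : 0 < δ) (hδ : δ ≤ 1 / 36)
    (r p w : Fin n → ℝ) (s : Fin m → ℝ)
    (hp : ∀ j, 0 < p j) (hw : ∀ j, 0 ≤ w j) (hs : ∀ i, 0 < s i)
    (yhat : ℕ) (hyhat : 1 ≤ yhat) (R : ℝ) (hR : 0 < R) (hr : ∀ j, 0 < r j ∧ r j ≤ R)
    (hopt : ∃ M C, Feasible n m r p s M C ∧
      ∀ M' C', Feasible n m r p s M' C' →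
        pseudoCost n δ w C ≤ pseudoCost n δ w C')
    (hre : ∀ M C, Feasible n m r p s M C → ∀ ι : ℤ, R < (1 + δ : ℝ) ^ ι →
      ∃ M' C', Feasible n m r p s M' C' ∧
        (∀ j, C j ≤ (1 + δ : ℝ) ^ ι → M' j = M j ∧ C' j = C j) ∧
        (∀ j, (1 + δ : ℝ) ^ ι < C j →
          (1 + δ : ℝ) ^ ι ≤ C' j - p j / s (M' j) ∧
          C' j ≤ (1 + δ : ℝ) ^ ι + R * yhat * (1 + δ) / δ ^ 23)) :
    ∃ M C, Feasible n m r p s M C ∧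
      (∀ M' C', Feasible n m r p s M' C' →
        pseudoCost n δ w C ≤ pseudoCost n δ w C') ∧
      ∀ j, C j ≤ yhat * R / δ ^ 25 := by
  obtain ⟨M, C, hfeas, hoptC⟩ := hopt
  set b : ℝ := 1 + δ with hbdef
  have hb : 1 < b := by simp [hbdef]; linarith
  have hb0 : 0 < b := lt_trans one_pos hb
  set R' : ℝ := yhat * R / δ ^ 24 with hR'def
  have hyhat1 : (1:ℝ) ≤ yhat := by exact_mod_cast hyhat
  have hR' : 0 < R' := by positivity
  set ι : ℤ := ⌊Real.logb b (b * R')⌋ + 1 with hιdef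
  set T : ℝ := b ^ ι with hTdef
  have hbR' : 0 < b * R' := by positivity
  -- b * R' < T ≤ b * (b * R')
  have hT1 : b * R' < T := by
    have h := Int.lt_floor_add_one (Real.logb b (b * R'))
    rw [Real.logb_lt_iff_lt_rpow hb hbR'] at h
    calc b * R' < b ^ ((⌊Real.logb b (b * R')⌋ : ℝ) + 1) := h
      _ = T := by
        rw [hTdef, show ((⌊Real.logb b (b * R')⌋:ℝ)+1) = ((ι:ℤ):ℝ) by
          rw [hιdef]; push_cast; ring, Real.rpow_intCast]
  have hT2 : T ≤ b * (b * R') := by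
    have h1 : ((ι:ℤ):ℝ) ≤ Real.logb b (b * R') + 1 := by
      rw [hιdef]; push_cast
      have := Int.floor_le (Real.logb b (b * R')); linarith
    have h2 : b ^ ((ι:ℤ):ℝ) ≤ b ^ (Real.logb b (b * R') + 1) :=
      Real.rpow_le_rpow_of_exponent_le hb.le h1
    rw [Real.rpow_intCast] at h2
    rwa [Real.rpow_add hb0, Real.rpow_logb hb0 (ne_of_gt hb) hbR',
      Real.rpow_one, mul_comm (b * R') b] at h2
  have hδ24 : δ ^ 24 ≤ 1 := pow_le_one₀ hδ0.le (by linarith)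
  have hRR' : R ≤ R' := by
    rw [hR'def, le_div_iff₀ (by positivity)]
    nlinarith [mul_le_mul_of_nonneg_left hδ24 hR.le]
  have hRT : R < T := lt_of_le_of_lt (by nlinarith) hT1
  obtain ⟨M', C', hfeas', hkeep, hmove⟩ := hre M C hfeas ι hRT
  have hT0 : 0 < T := zpow_pos hb0 ι
  -- key bound on moved jobs
  have hmoved : ∀ j, T < C j → T < C' j ∧ C' j < b ^ (ι + 1) := by
    intro j hj
    obtain ⟨h1, h2⟩ := hmove j hj
    have hps : 0 < p j / s (M' j) := div_pos (hp j) (hs (M' j))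
    refine ⟨by linarith, ?_⟩
    have hlen : R * yhat * (1 + δ) / δ ^ 23 = δ * (b * R') := by
      rw [hR'def, hbdef]; field_simp
    have : C' j ≤ T + δ * (b * R') := by rw [← hlen]; exact h2
    have hbT : b ^ (ι + 1) = b * T := by rw [hTdef, zpow_add_one₀ (ne_of_gt hb0)]; ring
    rw [hbT, hbdef]
    nlinarith
  -- termwise pseudo-cost comparison
  have hterm : ∀ j, w j * b ^ (⌊Real.logb b (C' j)⌋ + 1)
      ≤ w j * b ^ (⌊Real.logb b (C j)⌋ + 1) := by
    intro j
    by_cases hj : C j ≤ T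
    · rw [(hkeep j hj).2]
    · push_neg at hj
      obtain ⟨h1, h2⟩ := hmoved j hj
      rw [floor_logb_eq_of hb (le_of_lt h1) h2]
      have hfl : ι ≤ ⌊Real.logb b (C j)⌋ := ι_le_floor_logb hb hj
      exact mul_le_mul_of_nonneg_left
        (zpow_le_zpow_right₀ hb.le (by omega)) (hw j)
  have hcost : pseudoCost n δ w C' ≤ pseudoCost n δ w C :=
    Finset.sum_le_sum fun j _ => hterm j
  have hcost' : pseudoCost n δ w C ≤ pseudoCost n δ w C' := hoptC M' C' hfeas'
  refine ⟨M', C', hfeas', fun M'' C'' hf => le_trans hcost (hoptC M'' C'' hf), ?_⟩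
  intro j
  have hbound : C' j ≤ b * T := by
    by_cases hj : C j ≤ T
    · rw [(hkeep j hj).2]; nlinarith
    · push_neg at hj
      have h2 := (hmoved j hj).2
      rw [zpow_add_one₀ (ne_of_gt hb0)] at h2
      nlinarith
  have hfinal : b * T ≤ yhat * R / δ ^ 25 := by
    have h3 : b * T ≤ b ^ 3 * R' := by nlinarith
    have h4 : (yhat : ℝ) * R / δ ^ 25 = R' / δ := by
      rw [hR'def]; field_simp
    have hkey : δ * b ^ 3 ≤ 1 := by
      rw [hbdef]
      have h2 : δ ^ 2 ≤ δ := by nlinarith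
      have h3' : δ ^ 3 ≤ δ := by nlinarith
      have h4' : δ ^ 4 ≤ δ := by nlinarith
      nlinarith
    rw [h4, le_div_iff₀ hδ0]
    nlinarith [mul_le_mul_of_nonneg_right hkey hR'.le]
  exact le_trans hbound hfinal
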